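/- Suppose a bilinear form A is coercive on a Hilbert space V with constant C₂, and suppose ξ : [0,T] → V is C¹ with ξ(0) = 0 and A(ξ'(t), ψ) = −(B(v^N(t),ψ) − B(v(t),ψ)) for all ψ in a subspace, where |B(v^N,ψ) − B(v,ψ)| ≤ C‖e^N‖_V‖ψ‖_V and e^N = η − ξ. Then ‖ξ'(t)‖_V ≤ (C/C₂)‖e^N(t)‖_V, and consequently ‖ξ(t)‖_V ≤ C'∫₀^t (‖ξ(s)‖_V + ‖η(s)‖_V) ds, whence by Gronwall ‖ξ(t)‖_V ≤ C' e^{C't} ∫₀^t ‖η(s)‖_V ds. -/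

import Mathlib

open Set intervalIntegral

/-- abstract error propagation: if `A` is coercive on `V` with constant
`C₂`, `ξ` is `C¹` with `ξ(0) = 0`, `A(ξ'(t),ψ) = −(B(v^N,ψ) − B(v,ψ)) =: −D(t,ψ)` for
`ψ` in a subspace `S`, and `|D(t,ψ)| ≤ C‖e^N(t)‖‖ψ‖` with `e^N = η − ξ`, then
`‖ξ'(t)‖ ≤ (C/C₂)‖e^N(t)‖`, hence `‖ξ(t)‖ ≤ C'∫₀ᵗ(‖ξ‖+‖η‖)` and, by Gronwall,
`‖ξ(t)‖ ≤ C' e^{C't} ∫₀ᵗ ‖η‖`. -/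
theorem stmt9 {V : Type*} [NormedAddCommGroup V] [InnerProductSpace ℝ V]
    (T C C₂ : ℝ) (hT : 0 < T) (hC : 0 < C) (hC₂ : 0 < C₂)
    (A : V → V → ℝ) (S : Submodule ℝ V)
    (hcoer : ∀ φ : V, C₂ * ‖φ‖ ^ 2 ≤ A φ φ)
    (ξ ξ' η : ℝ → V) (D : ℝ → V → ℝ)
    (hηcont : ContinuousOn η (Set.Icc 0 T))
    (hderiv : ∀ t ∈ Set.Icc (0:ℝ) T, HasDerivAt ξ (ξ' t) t)
    (hξ'cont : ContinuousOn ξ' (Set.Icc 0 T))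
    (hξ0 : ξ 0 = 0)
    (hmem : ∀ t ∈ Set.Icc (0:ℝ) T, ξ' t ∈ S)
    (hA : ∀ t ∈ Set.Icc (0:ℝ) T, ∀ ψ ∈ S, A (ξ' t) ψ = -(D t ψ))
    (hD : ∀ t ∈ Set.Icc (0:ℝ) T, ∀ ψ : V, |D t ψ| ≤ C * ‖η t - ξ t‖ * ‖ψ‖) :
    (∀ t ∈ Set.Icc (0:ℝ) T, ‖ξ' t‖ ≤ (C / C₂) * ‖η t - ξ t‖) ∧
    ∃ C' : ℝ, 0 < C' ∧
      (∀ t ∈ Set.Icc (0:ℝ) T, ‖ξ t‖ ≤ C' * ∫ s in (0:ℝ)..t, (‖ξ s‖ + ‖η s‖)) ∧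
      (∀ t ∈ Set.Icc (0:ℝ) T,
        ‖ξ t‖ ≤ C' * Real.exp (C' * t) * ∫ s in (0:ℝ)..t, ‖η s‖) := by
  have hT0 : (0:ℝ) ≤ T := hT.le
  -- Step 1: pointwise bound on ξ'
  have step1 : ∀ t ∈ Set.Icc (0:ℝ) T, ‖ξ' t‖ ≤ (C / C₂) * ‖η t - ξ t‖ := by
    intro t ht
    have h1 : C₂ * ‖ξ' t‖ ^ 2 ≤ C * ‖η t - ξ t‖ * ‖ξ' t‖ :=
      calc C₂ * ‖ξ' t‖ ^ 2 ≤ A (ξ' t) (ξ' t) := hcoer _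
        _ = -(D t (ξ' t)) := hA t ht _ (hmem t ht)
        _ ≤ |D t (ξ' t)| := (neg_le_abs _)
        _ ≤ C * ‖η t - ξ t‖ * ‖ξ' t‖ := hD t ht _
    rcases eq_or_lt_of_le (norm_nonneg (ξ' t)) with h0 | h0
    · rw [← h0]; positivity
    · rw [div_mul_eq_mul_div, le_div_iff₀ hC₂]
      nlinarith [h1, h0, norm_nonneg (η t - ξ t)]
  set C' : ℝ := C / C₂ with hC'def
  have hC' : 0 < C' := div_pos hC hC₂
  -- continuity of ξ on the interval
  have hξcont : ContinuousOn ξ (Set.Icc 0 T) := fun t ht =>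
    (hderiv t ht).continuousAt.continuousWithinAt
  -- clamped versions, continuous on all of ℝ
  set cl : ℝ → ℝ := fun u => max 0 (min u T) with hcl
  have hclcont : Continuous cl := continuous_const.max (continuous_id.min continuous_const)
  have hclmem : ∀ u, cl u ∈ Set.Icc (0:ℝ) T := fun u =>
    ⟨le_max_left _ _, max_le hT0 (min_le_right _ _)⟩
  have hcleq : ∀ u ∈ Set.Icc (0:ℝ) T, cl u = u := fun u hu => by
    simp [hcl, min_eq_left hu.2, max_eq_right hu.1]
  set hξ : ℝ → ℝ := fun u => ‖ξ (cl u)‖ with hhξ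
  set hη : ℝ → ℝ := fun u => ‖η (cl u)‖ with hhη
  have hξc : Continuous hξ := (hξcont.comp_continuous hclcont hclmem).norm
  have hηc : Continuous hη := (hηcont.comp_continuous hclcont hclmem).norm
  have hξnn : ∀ u, 0 ≤ hξ u := fun u => norm_nonneg _
  have hηnn : ∀ u, 0 ≤ hη u := fun u => norm_nonneg _
  -- primitive of the (clamped) norm of ξ'
  set b : ℝ → ℝ := fun u => ‖ξ' (cl u)‖ with hb
  have hbc : Continuous b := (hξ'cont.comp_continuous hclcont hclmem).norm
  set B : ℝ → ℝ := fun s => ∫ u in (0:ℝ)..s, b u with hB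
  have hBderiv : ∀ s : ℝ, HasDerivAt B (b s) s := fun s =>
    intervalIntegral.integral_hasDerivAt_right (hbc.intervalIntegrable _ _)
      hbc.aestronglyMeasurable.stronglyMeasurableAtFilter hbc.continuousAt
  -- a priori bound ‖ξ x‖ ≤ B x on [0, T]
  have hxi_le : ∀ x ∈ Set.Icc (0:ℝ) T, ‖ξ x‖ ≤ B x := by
    intro x hx
    refine image_norm_le_of_norm_deriv_right_le_deriv_boundary
      (f' := ξ') hξcont (fun s hs => (hderiv s ⟨hs.1, hs.2.le⟩).hasDerivWithinAt)
      ?_ hBderiv ?_ hx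
    · simp [hB, hξ0]
    · intro s hs
      have hs' : s ∈ Set.Icc (0:ℝ) T := ⟨hs.1, hs.2.le⟩
      simp [hb, hcleq s hs']
  -- Step 2
  have step2 : ∀ t ∈ Set.Icc (0:ℝ) T, ‖ξ t‖ ≤ C' * ∫ s in (0:ℝ)..t, (‖ξ s‖ + ‖η s‖) := by
    intro t ht
    have hcongr : ∫ s in (0:ℝ)..t, C' * (‖ξ s‖ + ‖η s‖)
        = ∫ s in (0:ℝ)..t, C' * (hξ s + hη s) := by
      apply intervalIntegral.integral_congr
      intro u hu
      have hu' : u ∈ Set.Icc (0:ℝ) T := by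
        rw [Set.uIcc_of_le ht.1] at hu
        exact ⟨hu.1, hu.2.trans ht.2⟩
      simp [hhξ, hhη, hcleq u hu']
    calc ‖ξ t‖ ≤ B t := hxi_le t ht
      _ ≤ ∫ s in (0:ℝ)..t, C' * (hξ s + hη s) := by
          apply intervalIntegral.integral_mono_on ht.1 (hbc.intervalIntegrable _ _)
            ((continuous_const.mul (hξc.add hηc)).intervalIntegrable _ _)
          intro s hs
          have hs' : s ∈ Set.Icc (0:ℝ) T := ⟨hs.1, hs.2.trans ht.2⟩
          have hbe : b s = ‖ξ' s‖ := by simp [hb, hcleq s hs']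
          have h1 : hξ s = ‖ξ s‖ := by simp [hhξ, hcleq s hs']
          have h2 : hη s = ‖η s‖ := by simp [hhη, hcleq s hs']
          show b s ≤ C' * (hξ s + hη s)
          rw [hbe, h1, h2]
          calc ‖ξ' s‖ ≤ C' * ‖η s - ξ s‖ := step1 s hs'
            _ ≤ C' * (‖ξ s‖ + ‖η s‖) := by
                have := norm_sub_le (η s) (ξ s)
                nlinarith [hC'.le]
      _ = ∫ s in (0:ℝ)..t, C' * (‖ξ s‖ + ‖η s‖) := hcongr.symm
      _ = C' * ∫ s in (0:ℝ)..t, (‖ξ s‖ + ‖η s‖) := intervalIntegral.integral_const_mul _ _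
  refine ⟨step1, C', hC', step2, ?_⟩
  -- Step 3 : Gronwall
  intro t₀ ht₀
  set F : ℝ → ℝ := fun s => ∫ u in (0:ℝ)..s, hξ u with hF
  have hFderiv : ∀ s : ℝ, HasDerivAt F (hξ s) s := fun s =>
    intervalIntegral.integral_hasDerivAt_right (hξc.intervalIntegrable _ _)
      hξc.aestronglyMeasurable.stronglyMeasurableAtFilter hξc.continuousAt
  have hFcont : Continuous F := by
    rw [continuous_iff_continuousAt]; exact fun s => (hFderiv s).continuousAt
  set G : ℝ := ∫ s in (0:ℝ)..t₀, hη s with hG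
  have hGnn : 0 ≤ G := intervalIntegral.integral_nonneg ht₀.1 (fun u _ => hηnn u)
  -- key: for s ∈ [0,T] with s ≤ t₀, bound ‖ξ s‖ by C' * F s + C' * G
  have key : ∀ s ∈ Set.Icc (0:ℝ) T, s ≤ t₀ → ‖ξ s‖ ≤ C' * F s + C' * G := by
    intro s hs hst
    have hcongr : ∫ u in (0:ℝ)..s, (‖ξ u‖ + ‖η u‖) = ∫ u in (0:ℝ)..s, (hξ u + hη u) := by
      apply intervalIntegral.integral_congr
      intro u hu
      have hu' : u ∈ Set.Icc (0:ℝ) T := by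
        rw [Set.uIcc_of_le hs.1] at hu
        exact ⟨hu.1, hu.2.trans hs.2⟩
      simp [hhξ, hhη, hcleq u hu']
    have hadd : ∫ u in (0:ℝ)..s, (hξ u + hη u)
        = F s + ∫ u in (0:ℝ)..s, hη u :=
      intervalIntegral.integral_add (hξc.intervalIntegrable _ _) (hηc.intervalIntegrable _ _)
    have hmono : ∫ u in (0:ℝ)..s, hη u ≤ G := by
      have hsplit : G = (∫ u in (0:ℝ)..s, hη u) + ∫ u in s..t₀, hη u :=
        (intervalIntegral.integral_add_adjacent_intervals
          (hηc.intervalIntegrable _ _) (hηc.intervalIntegrable _ _)).symm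
      have : 0 ≤ ∫ u in s..t₀, hη u :=
        intervalIntegral.integral_nonneg hst (fun u _ => hηnn u)
      linarith
    have := step2 s hs
    rw [hcongr, hadd] at this
    nlinarith [hC'.le]
  -- Gronwall applied to F on [0, t₀]
  have hgron : ∀ s ∈ Set.Icc (0:ℝ) t₀, ‖F s‖ ≤ gronwallBound 0 C' (C' * G) (s - 0) := by
    apply norm_le_gronwallBound_of_norm_deriv_right_le hFcont.continuousOn
      (fun s _ => (hFderiv s).hasDerivWithinAt)
    · simp [hF]
    · intro s hs
      have hs' : s ∈ Set.Icc (0:ℝ) T := ⟨hs.1, hs.2.le.trans ht₀.2⟩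
      have h1 : hξ s = ‖ξ s‖ := by simp [hhξ, hcleq s hs']
      have h2 : ‖hξ s‖ = hξ s := abs_of_nonneg (hξnn s)
      have h3 : F s ≤ ‖F s‖ := le_abs_self _
      have := key s hs' hs.2.le
      rw [h2, h1]
      nlinarith [hC'.le]
  have hFb' : F t₀ ≤ G * (Real.exp (C' * t₀) - 1) := by
    have h := hgron t₀ ⟨ht₀.1, le_rfl⟩
    rw [sub_zero, gronwallBound_of_K_ne_0 hC'.ne'] at h
    simp only [zero_mul, zero_add] at h
    have h2 : C' * G / C' = G := by field_simp
    calc F t₀ ≤ ‖F t₀‖ := le_abs_self _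
      _ ≤ C' * G / C' * (Real.exp (C' * t₀) - 1) := h
      _ = G * (Real.exp (C' * t₀) - 1) := by rw [h2]
  have hfinal : ‖ξ t₀‖ ≤ C' * Real.exp (C' * t₀) * G := by
    have hk := key t₀ ht₀ le_rfl
    nlinarith [hC'.le, Real.exp_pos (C' * t₀)]
  have hGeq : G = ∫ s in (0:ℝ)..t₀, ‖η s‖ := by
    apply intervalIntegral.integral_congr
    intro u hu
    have hu' : u ∈ Set.Icc (0:ℝ) T := by
      rw [Set.uIcc_of_le ht₀.1] at hu
      exact ⟨hu.1, hu.2.trans ht₀.2⟩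
    simp [hhη, hcleq u hu']
  rwa [hGeq] at hfinal
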